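/- arXiv:1903.05465 — 2 statements merged into one kernel-verified Lean document; each statement's English description precedes it below -/
import Mathlib

section
/- Assume: for k = 1,2 there are constants M_k > 0, δ_k > 0 and C's such that C0_k·⟨x⟩^{2(M_k+1)} − C1_k ≤ V_k(t,x) ≤ C2_k·⟨x⟩^{2(M_k+1)} with C0_k, C2_k > 0, and |A^{(k)}(t,x)| ≤ C·⟨x⟩^{M_k+1−δ_k}; and that |W12(t,x)| ≤ C·⟨x⟩^{2(M0+1)−δ} with δ > 0, where M0 = min(M1,M2). Then there exist constants μ* ≥ 0 and C0* > 0 such that for all t ∈ [0,T], z = (x^{(1)},x^{(2)},x^{(3)},x^{(4)}) ∈ ℝ^{4d} and ζ = (ξ^{(1)},ξ^{(2)},ξ^{(3)},ξ^{(4)}) ∈ ℝ^{4d}: μ* + ĥ(t,z,ζ) ≥ C0*·(⟨ζ⟩² + Φ(z)²). (Estimate (5.5-2) of Lemma 5.1.) -/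
noncomputable section
open Real Set

/-- The Japanese bracket `⟨x⟩ = (1 + ‖x‖²)^{1/2}`. -/
def jap {E : Type*} [NormedAddCommGroup E] (x : E) : ℝ := Real.sqrt (1 + ‖x‖ ^ 2)

lemma jap_one_le {E : Type*} [NormedAddCommGroup E] (x : E) : 1 ≤ jap x := by
  have h := Real.sqrt_le_sqrt (show (1:ℝ) ≤ 1 + ‖x‖^2 by nlinarith [sq_nonneg ‖x‖])
  simpa [jap] using h

lemma jap_pos {E : Type*} [NormedAddCommGroup E] (x : E) : 0 < jap x :=
  lt_of_lt_of_le one_pos (jap_one_le x)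

lemma jap_sq {E : Type*} [NormedAddCommGroup E] (x : E) : jap x ^ 2 = 1 + ‖x‖ ^ 2 :=
  Real.sq_sqrt (by positivity)

lemma rpow_two_mul (y : ℝ) (hy : 0 < y) (r : ℝ) : (y ^ r) ^ 2 = y ^ (2*r) := by
  rw [pow_two, ← Real.rpow_add hy, two_mul]

lemma jap_sub_le {E : Type*} [NormedAddCommGroup E] (x y : E) :
    jap (x - y) ≤ jap x + jap y := by
  have h1 : ‖x - y‖ ≤ ‖x‖ + ‖y‖ := norm_sub_le x y
  have hAx : ‖x‖ ≤ jap x := by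
    have := jap_sq x
    nlinarith [jap_pos x, norm_nonneg x]
  have hBy : ‖y‖ ≤ jap y := by
    have := jap_sq y
    nlinarith [jap_pos y, norm_nonneg y]
  have key : 1 + ‖x - y‖^2 ≤ (jap x + jap y)^2 := by
    have hab : ‖x‖ * ‖y‖ ≤ jap x * jap y :=
      mul_le_mul hAx hBy (norm_nonneg y) (jap_pos x).le
    nlinarith [jap_sq x, jap_sq y, norm_nonneg x, norm_nonneg y, norm_nonneg (x - y)]
  calc jap (x - y) = Real.sqrt (1 + ‖x - y‖^2) := rfl
    _ ≤ Real.sqrt ((jap x + jap y)^2) := Real.sqrt_le_sqrt key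
    _ = jap x + jap y := Real.sqrt_sq (by linarith [jap_pos x, jap_pos y])

lemma aux1 (a b ε : ℝ) (hba : b < a) (hε : 0 < ε) :
    ∃ C : ℝ, 0 ≤ C ∧ ∀ y : ℝ, 1 ≤ y → y ^ b ≤ ε * y ^ a + C := by
  refine ⟨max 1 ((ε⁻¹) ^ (b / (a - b))), le_max_of_le_left zero_le_one, ?_⟩
  intro y hy
  have hy0 : 0 < y := lt_of_lt_of_le one_pos hy
  have hCnn : (0:ℝ) ≤ max 1 ((ε⁻¹) ^ (b / (a - b))) := le_max_of_le_left zero_le_one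
  by_cases h : 1 ≤ ε * y ^ (a - b)
  · have h1 : y ^ b * y ^ (a-b) = y ^ a := by
      rw [← Real.rpow_add hy0]; congr 1; ring
    have hb : 0 < y ^ b := Real.rpow_pos_of_pos hy0 b
    have h2 : y ^ b ≤ ε * y ^ a := by
      calc y ^ b = y ^ b * 1 := by ring
        _ ≤ y ^ b * (ε * y ^ (a-b)) := by nlinarith
        _ = ε * (y ^ b * y ^ (a-b)) := by ring
        _ = ε * y ^ a := by rw [h1]
    linarith
  · push_neg at h
    have h2 : y ^ (a-b) < ε⁻¹ := by
      rw [← one_div, lt_div_iff₀ hε]; linarith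
    have hεy : 0 ≤ ε * y ^ a := by positivity
    by_cases hb : b ≤ 0
    · have h3 : y ^ b ≤ 1 := Real.rpow_le_one_of_one_le_of_nonpos hy hb
      have h4 : (1:ℝ) ≤ max 1 ((ε⁻¹) ^ (b / (a - b))) := le_max_left _ _
      linarith
    · push_neg at hb
      have hab : (0:ℝ) < a - b := by linarith
      have h3 : y ^ b = (y ^ (a-b)) ^ (b/(a-b)) := by
        rw [← Real.rpow_mul hy0.le]
        congr 1; field_simp
      have h4 : (y ^ (a-b)) ^ (b/(a-b)) ≤ (ε⁻¹) ^ (b/(a-b)) :=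
        Real.rpow_le_rpow (Real.rpow_nonneg hy0.le _) h2.le (by positivity)
      have h5 : y ^ b ≤ max 1 ((ε⁻¹) ^ (b / (a - b))) := by
        rw [h3]; exact le_trans h4 (le_max_right _ _)
      linarith

lemma aux2 (K τ : ℝ) (hK : 0 ≤ K) (hτ : 0 < τ) : ∃ ε : ℝ, 0 < ε ∧ K * ε ≤ τ := by
  refine ⟨τ / (K + 1), by positivity, ?_⟩
  rw [mul_div_assoc', div_le_iff₀ (by linarith)]
  nlinarith

lemma aux3 (r s t : ℝ) (hr : 0 ≤ r) (hs : 1 ≤ s) (ht : 1 ≤ t) :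
    (s + t) ^ r ≤ 2 ^ r * (s ^ r + t ^ r) := by
  have h1 : (0:ℝ) ≤ s ^ r := Real.rpow_nonneg (by linarith) r
  have h1' : (0:ℝ) ≤ t ^ r := Real.rpow_nonneg (by linarith) r
  have h2 : (0:ℝ) ≤ 2 ^ r := Real.rpow_nonneg (by norm_num) r
  rcases le_total s t with h | h
  · calc (s+t)^r ≤ (2*t)^r := Real.rpow_le_rpow (by linarith) (by linarith) hr
      _ = 2^r * t^r := Real.mul_rpow (by norm_num) (by linarith)
      _ ≤ 2^r * (s^r + t^r) := by nlinarith
  · calc (s+t)^r ≤ (2*s)^r := Real.rpow_le_rpow (by linarith) (by linarith) hr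
      _ = 2^r * s^r := Real.mul_rpow (by norm_num) (by linarith)
      _ ≤ 2^r * (s^r + t^r) := by nlinarith

lemma sqtri (a b c : ℝ) (hc : 0 ≤ c) (h : c ≤ a + b) : c^2 ≤ 2*a^2 + 2*b^2 := by
  nlinarith [sq_nonneg (a-b), sq_nonneg (a+b)]

lemma four_sq (a b c e : ℝ) : (a+b+c+e)^2 ≤ 4*(a^2+b^2+c^2+e^2) := by
  nlinarith [sq_nonneg (a-b), sq_nonneg (a-c), sq_nonneg (a-e), sq_nonneg (b-c),
    sq_nonneg (b-e), sq_nonneg (c-e)]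

lemma le_abs_mul (C p w : ℝ) (hp : 0 ≤ p) (h : w ≤ C * p) : w ≤ |C| * p :=
  le_trans h (mul_le_mul_of_nonneg_right (le_abs_self C) hp)

set_option maxHeartbeats 1000000 in
/-- **Estimate (5.5-2) of Lemma 5.1.** Under the growth bounds on `V_k`, `A^{(k)}` (k = 1,2)
and on `W12`, there are constants `μ* ≥ 0` and `C0* > 0` with
`μ* + ĥ(t,z,ζ) ≥ C0*·(⟨ζ⟩² + Φ(z)²)`, where
`ĥ(t,z,ζ) = Σ_{k=1,2} h_k(t,x^{(k)},ξ^{(k)}) + W12(t,x^{(1)}−x^{(2)}) + Σ_{k=3,4} l_k(x^{(k)},ξ^{(k)})`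
and `Φ(z) = ⟨x^{(1)}⟩^{M1+1} + ⟨x^{(2)}⟩^{M2+1} + ⟨x^{(3)}⟩ + ⟨x^{(4)}⟩`. -/
theorem stmt7 (d : ℕ) (T m1 m2 m3 m4 : ℝ) (hT : 0 < T)
    (hm1 : 0 < m1) (hm2 : 0 < m2) (hm3 : 0 < m3) (hm4 : 0 < m4)
    (M1 M2 δ1 δ2 δ : ℝ) (hM1 : 0 < M1) (hM2 : 0 < M2)
    (hδ1 : 0 < δ1) (hδ2 : 0 < δ2) (hδ : 0 < δ)
    (V1 V2 : ℝ → EuclideanSpace ℝ (Fin d) → ℝ)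
    (A1 A2 : ℝ → EuclideanSpace ℝ (Fin d) → EuclideanSpace ℝ (Fin d))
    (W12 : ℝ → EuclideanSpace ℝ (Fin d) → ℝ)
    (C01 C11 C21 C02 C12 C22 CA CW : ℝ)
    (hC01 : 0 < C01) (hC21 : 0 < C21) (hC02 : 0 < C02) (hC22 : 0 < C22)
    (hV1low : ∀ t ∈ Icc (0:ℝ) T, ∀ x, C01 * jap x ^ (2*(M1+1)) - C11 ≤ V1 t x)
    (hV1up : ∀ t ∈ Icc (0:ℝ) T, ∀ x, V1 t x ≤ C21 * jap x ^ (2*(M1+1)))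
    (hV2low : ∀ t ∈ Icc (0:ℝ) T, ∀ x, C02 * jap x ^ (2*(M2+1)) - C12 ≤ V2 t x)
    (hV2up : ∀ t ∈ Icc (0:ℝ) T, ∀ x, V2 t x ≤ C22 * jap x ^ (2*(M2+1)))
    (hA1 : ∀ t ∈ Icc (0:ℝ) T, ∀ x, ‖A1 t x‖ ≤ CA * jap x ^ (M1+1-δ1))
    (hA2 : ∀ t ∈ Icc (0:ℝ) T, ∀ x, ‖A2 t x‖ ≤ CA * jap x ^ (M2+1-δ2))
    (hW12 : ∀ t ∈ Icc (0:ℝ) T, ∀ x, |W12 t x| ≤ CW * jap x ^ (2*(min M1 M2 + 1) - δ)) :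
    ∃ μs C0s : ℝ, 0 ≤ μs ∧ 0 < C0s ∧
      ∀ t ∈ Icc (0:ℝ) T, ∀ x1 x2 x3 x4 ξ1 ξ2 ξ3 ξ4 : EuclideanSpace ℝ (Fin d),
        C0s * ((1 + ‖ξ1‖^2 + ‖ξ2‖^2 + ‖ξ3‖^2 + ‖ξ4‖^2)
            + (jap x1 ^ (M1+1) + jap x2 ^ (M2+1) + jap x3 + jap x4) ^ 2)
          ≤ μs + (((1/(2*m1)) * ‖ξ1 - A1 t x1‖^2 + V1 t x1)
              + ((1/(2*m2)) * ‖ξ2 - A2 t x2‖^2 + V2 t x2)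
              + W12 t (x1 - x2)
              + ((1/(2*m3)) * ‖ξ3‖^2 + jap x3 ^ 2)
              + ((1/(2*m4)) * ‖ξ4‖^2 + jap x4 ^ 2)) := by
  -- exponent for the pair potential
  set a2 : ℝ := max (2*(min M1 M2 + 1) - δ) 0 with ha2def
  have ha2nn : 0 ≤ a2 := le_max_right _ _
  have ha2lt1 : a2 < 2*(M1+1) := by
    apply max_lt
    · have := min_le_left M1 M2; linarith
    · linarith
  have ha2lt2 : a2 < 2*(M2+1) := by
    apply max_lt
    · have := min_le_right M1 M2; linarith
    · linarith
  have hK1nn : (0:ℝ) ≤ CA^2/(2*m1) := div_nonneg (sq_nonneg CA) (by linarith)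
  have hK2nn : (0:ℝ) ≤ CA^2/(2*m2) := div_nonneg (sq_nonneg CA) (by linarith)
  have h2a2pos : (0:ℝ) < (2:ℝ) ^ a2 := Real.rpow_pos_of_pos (by norm_num) a2
  have hKWnn : (0:ℝ) ≤ |CW| * (2:ℝ) ^ a2 := mul_nonneg (abs_nonneg CW) h2a2pos.le
  obtain ⟨ε1, hε1, hKε1⟩ := aux2 (CA^2/(2*m1)) (C01/4) hK1nn (by linarith)
  obtain ⟨ε2, hε2, hKε2⟩ := aux2 (CA^2/(2*m2)) (C02/4) hK2nn (by linarith)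
  obtain ⟨ε3, hε3, hKε3⟩ := aux2 (|CW| * (2:ℝ) ^ a2) (C01/4) hKWnn (by linarith)
  obtain ⟨ε4, hε4, hKε4⟩ := aux2 (|CW| * (2:ℝ) ^ a2) (C02/4) hKWnn (by linarith)
  obtain ⟨D1, hD1, hD1'⟩ := aux1 (2*(M1+1)) (2*(M1+1-δ1)) ε1 (by linarith) hε1
  obtain ⟨D2, hD2, hD2'⟩ := aux1 (2*(M2+1)) (2*(M2+1-δ2)) ε2 (by linarith) hε2
  obtain ⟨D3, hD3, hD3'⟩ := aux1 (2*(M1+1)) a2 ε3 ha2lt1 hε3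
  obtain ⟨D4, hD4, hD4'⟩ := aux1 (2*(M2+1)) a2 ε4 ha2lt2 hε4
  set c : ℝ := min (min (min (1/(4*m1)) (1/(4*m2))) (min (1/(2*m3)) (1/(2*m4))))
      (min (min (C01/2) (C02/2)) 1) with hcdef
  have hc : 0 < c := by
    rw [hcdef]
    refine lt_min (lt_min (lt_min ?_ ?_) (lt_min ?_ ?_)) (lt_min (lt_min ?_ ?_) one_pos) <;>
      [skip; skip; skip; skip; linarith; linarith] <;> positivity
  have hc1 : c ≤ 1/(4*m1) := by
    rw [hcdef]; exact le_trans (min_le_left _ _) (le_trans (min_le_left _ _) (min_le_left _ _))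
  have hc2 : c ≤ 1/(4*m2) := by
    rw [hcdef]; exact le_trans (min_le_left _ _) (le_trans (min_le_left _ _) (min_le_right _ _))
  have hc3 : c ≤ 1/(2*m3) := by
    rw [hcdef]; exact le_trans (min_le_left _ _) (le_trans (min_le_right _ _) (min_le_left _ _))
  have hc4 : c ≤ 1/(2*m4) := by
    rw [hcdef]; exact le_trans (min_le_left _ _) (le_trans (min_le_right _ _) (min_le_right _ _))
  have hc5 : c ≤ C01/2 := by
    rw [hcdef]; exact le_trans (min_le_right _ _) (le_trans (min_le_left _ _) (min_le_left _ _))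
  have hc6 : c ≤ C02/2 := by
    rw [hcdef]; exact le_trans (min_le_right _ _) (le_trans (min_le_left _ _) (min_le_right _ _))
  have hc7 : c ≤ 1 := by
    rw [hcdef]; exact le_trans (min_le_right _ _) (min_le_right _ _)
  refine ⟨|C11| + |C12| + CA^2/(2*m1)*D1 + CA^2/(2*m2)*D2
      + |CW| * (2:ℝ) ^ a2 * D3 + |CW| * (2:ℝ) ^ a2 * D4 + c/4, c/4, ?_, by linarith, ?_⟩
  · have h1 := mul_nonneg hK1nn hD1
    have h2 := mul_nonneg hK2nn hD2
    have h3 := mul_nonneg hKWnn hD3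
    have h4 := mul_nonneg hKWnn hD4
    have h5 := abs_nonneg C11
    have h6 := abs_nonneg C12
    linarith
  intro t ht x1 x2 x3 x4 ξ1 ξ2 ξ3 ξ4
  have hj1 := jap_one_le x1
  have hj2 := jap_one_le x2
  have hj3 := jap_one_le x3
  have hj4 := jap_one_le x4
  have hj12 := jap_one_le (x1 - x2)
  have hP1nn : (0:ℝ) ≤ jap x1 ^ (2*(M1+1)) := Real.rpow_nonneg (by linarith) _
  have hP2nn : (0:ℝ) ≤ jap x2 ^ (2*(M2+1)) := Real.rpow_nonneg (by linarith) _
  -- potentials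
  have hV1' := hV1low t ht x1
  have hV2' := hV2low t ht x2
  -- kinetic terms
  have htri1 : ‖ξ1‖ ≤ ‖ξ1 - A1 t x1‖ + ‖A1 t x1‖ := by
    have := norm_add_le (ξ1 - A1 t x1) (A1 t x1); simpa using this
  have hsq1 : ‖ξ1‖^2 ≤ 2*‖ξ1 - A1 t x1‖^2 + 2*‖A1 t x1‖^2 :=
    sqtri _ _ _ (norm_nonneg ξ1) htri1
  have htri2 : ‖ξ2‖ ≤ ‖ξ2 - A2 t x2‖ + ‖A2 t x2‖ := by
    have := norm_add_le (ξ2 - A2 t x2) (A2 t x2); simpa using this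
  have hsq2 : ‖ξ2‖^2 ≤ 2*‖ξ2 - A2 t x2‖^2 + 2*‖A2 t x2‖^2 :=
    sqtri _ _ _ (norm_nonneg ξ2) htri2
  have hk1 := mul_le_mul_of_nonneg_left hsq1 (show (0:ℝ) ≤ 1/(4*m1) by positivity)
  have hk2 := mul_le_mul_of_nonneg_left hsq2 (show (0:ℝ) ≤ 1/(4*m2) by positivity)
  -- vector potential bounds
  have hA1e : jap x1 ^ (M1+1-δ1) > 0 := Real.rpow_pos_of_pos (jap_pos x1) _
  have hA2e : jap x2 ^ (M2+1-δ2) > 0 := Real.rpow_pos_of_pos (jap_pos x2) _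
  have hA1abs : ‖A1 t x1‖ ≤ |CA| * jap x1 ^ (M1+1-δ1) :=
    le_abs_mul _ _ _ hA1e.le (hA1 t ht x1)
  have hA2abs : ‖A2 t x2‖ ≤ |CA| * jap x2 ^ (M2+1-δ2) :=
    le_abs_mul _ _ _ hA2e.le (hA2 t ht x2)
  have hA1sq : ‖A1 t x1‖^2 ≤ CA^2 * jap x1 ^ (2*(M1+1-δ1)) := by
    have h2 : (|CA| * jap x1 ^ (M1+1-δ1))^2 = CA^2 * jap x1 ^ (2*(M1+1-δ1)) := by
      rw [mul_pow, sq_abs, rpow_two_mul _ (jap_pos x1)]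
    calc ‖A1 t x1‖^2 ≤ (|CA| * jap x1 ^ (M1+1-δ1))^2 :=
          pow_le_pow_left₀ (norm_nonneg _) hA1abs 2
      _ = _ := h2
  have hA2sq : ‖A2 t x2‖^2 ≤ CA^2 * jap x2 ^ (2*(M2+1-δ2)) := by
    have h2 : (|CA| * jap x2 ^ (M2+1-δ2))^2 = CA^2 * jap x2 ^ (2*(M2+1-δ2)) := by
      rw [mul_pow, sq_abs, rpow_two_mul _ (jap_pos x2)]
    calc ‖A2 t x2‖^2 ≤ (|CA| * jap x2 ^ (M2+1-δ2))^2 :=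
          pow_le_pow_left₀ (norm_nonneg _) hA2abs 2
      _ = _ := h2
  have hA1m := mul_le_mul_of_nonneg_left hA1sq (show (0:ℝ) ≤ 1/(2*m1) by positivity)
  have hA2m := mul_le_mul_of_nonneg_left hA2sq (show (0:ℝ) ≤ 1/(2*m2) by positivity)
  have hAe1 := mul_le_mul_of_nonneg_left (hD1' _ hj1) hK1nn
  have hAe2 := mul_le_mul_of_nonneg_left (hD2' _ hj2) hK2nn
  have hAε1 := mul_le_mul_of_nonneg_right hKε1 hP1nn
  have hAε2 := mul_le_mul_of_nonneg_right hKε2 hP2nn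
  -- pair potential
  have hWb := hW12 t ht (x1 - x2)
  have hjd : (0:ℝ) < jap (x1-x2) ^ (2*(min M1 M2 + 1) - δ) :=
    Real.rpow_pos_of_pos (jap_pos _) _
  have hW1 : |W12 t (x1-x2)| ≤ |CW| * jap (x1-x2) ^ (2*(min M1 M2 + 1) - δ) :=
    le_abs_mul _ _ _ hjd.le hWb
  have hW2 : jap (x1-x2) ^ (2*(min M1 M2 + 1) - δ) ≤ jap (x1-x2) ^ a2 :=
    Real.rpow_le_rpow_of_exponent_le hj12 (le_max_left _ _)
  have hW3 : jap (x1-x2) ^ a2 ≤ (jap x1 + jap x2) ^ a2 :=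
    Real.rpow_le_rpow (by linarith) (jap_sub_le x1 x2) ha2nn
  have hW4 : (jap x1 + jap x2) ^ a2 ≤ 2 ^ a2 * (jap x1 ^ a2 + jap x2 ^ a2) :=
    aux3 a2 _ _ ha2nn hj1 hj2
  have hW5 : |CW| * jap (x1-x2) ^ (2*(min M1 M2 + 1) - δ)
      ≤ |CW| * ((2:ℝ) ^ a2 * (jap x1 ^ a2 + jap x2 ^ a2)) :=
    mul_le_mul_of_nonneg_left (le_trans hW2 (le_trans hW3 hW4)) (abs_nonneg CW)
  have hW6 := mul_le_mul_of_nonneg_left (hD3' _ hj1) hKWnn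
  have hW7 := mul_le_mul_of_nonneg_left (hD4' _ hj2) hKWnn
  have hWε1 := mul_le_mul_of_nonneg_right hKε3 hP1nn
  have hWε2 := mul_le_mul_of_nonneg_right hKε4 hP2nn
  have hWneg : -|W12 t (x1-x2)| ≤ W12 t (x1-x2) := neg_abs_le _
  -- Φ bound
  have hPsq1 : (jap x1 ^ (M1+1))^2 = jap x1 ^ (2*(M1+1)) := rpow_two_mul _ (jap_pos x1) _
  have hPsq2 : (jap x2 ^ (M2+1))^2 = jap x2 ^ (2*(M2+1)) := rpow_two_mul _ (jap_pos x2) _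
  have hΦ : (jap x1 ^ (M1+1) + jap x2 ^ (M2+1) + jap x3 + jap x4)^2
      ≤ 4*(jap x1 ^ (2*(M1+1)) + jap x2 ^ (2*(M2+1)) + jap x3^2 + jap x4^2) := by
    rw [← hPsq1, ← hPsq2]
    exact four_sq _ _ _ _
  -- c-multiplied bounds
  have hcu1 := mul_le_mul_of_nonneg_right hc1 (sq_nonneg ‖ξ1‖)
  have hcu2 := mul_le_mul_of_nonneg_right hc2 (sq_nonneg ‖ξ2‖)
  have hcu3 := mul_le_mul_of_nonneg_right hc3 (sq_nonneg ‖ξ3‖)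
  have hcu4 := mul_le_mul_of_nonneg_right hc4 (sq_nonneg ‖ξ4‖)
  have hcP1 := mul_le_mul_of_nonneg_right hc5 hP1nn
  have hcP2 := mul_le_mul_of_nonneg_right hc6 hP2nn
  have hcq3 := mul_le_mul_of_nonneg_right hc7 (sq_nonneg (jap x3))
  have hcq4 := mul_le_mul_of_nonneg_right hc7 (sq_nonneg (jap x4))
  have hstep3 : c * (‖ξ1‖^2 + ‖ξ2‖^2 + ‖ξ3‖^2 + ‖ξ4‖^2
      + jap x1 ^ (2*(M1+1)) + jap x2 ^ (2*(M2+1)) + jap x3^2 + jap x4^2)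
      ≤ (|C11| + |C12| + CA^2/(2*m1)*D1 + CA^2/(2*m2)*D2
          + |CW| * (2:ℝ) ^ a2 * D3 + |CW| * (2:ℝ) ^ a2 * D4)
        + (((1/(2*m1)) * ‖ξ1 - A1 t x1‖^2 + V1 t x1)
            + ((1/(2*m2)) * ‖ξ2 - A2 t x2‖^2 + V2 t x2)
            + W12 t (x1 - x2)
            + ((1/(2*m3)) * ‖ξ3‖^2 + jap x3 ^ 2)
            + ((1/(2*m4)) * ‖ξ4‖^2 + jap x4 ^ 2)) := by
    have habs1 := le_abs_self C11
    have habs2 := le_abs_self C12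
    have e1 : 1/(4*m1)*(2*‖ξ1 - A1 t x1‖^2 + 2*‖A1 t x1‖^2)
        = 1/(2*m1)*‖ξ1 - A1 t x1‖^2 + 1/(2*m1)*‖A1 t x1‖^2 := by ring
    have e2 : 1/(4*m2)*(2*‖ξ2 - A2 t x2‖^2 + 2*‖A2 t x2‖^2)
        = 1/(2*m2)*‖ξ2 - A2 t x2‖^2 + 1/(2*m2)*‖A2 t x2‖^2 := by ring
    have e3 : 1/(2*m1)*(CA^2 * jap x1 ^ (2*(M1+1-δ1)))
        = CA^2/(2*m1) * jap x1 ^ (2*(M1+1-δ1)) := by ring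
    have e4 : 1/(2*m2)*(CA^2 * jap x2 ^ (2*(M2+1-δ2)))
        = CA^2/(2*m2) * jap x2 ^ (2*(M2+1-δ2)) := by ring
    have e5 : CA^2/(2*m1)*(ε1 * jap x1 ^ (2*(M1+1)) + D1)
        = CA^2/(2*m1)*ε1 * jap x1 ^ (2*(M1+1)) + CA^2/(2*m1)*D1 := by ring
    have e6 : CA^2/(2*m2)*(ε2 * jap x2 ^ (2*(M2+1)) + D2)
        = CA^2/(2*m2)*ε2 * jap x2 ^ (2*(M2+1)) + CA^2/(2*m2)*D2 := by ring
    have e7 : |CW| * ((2:ℝ)^a2 * (jap x1 ^ a2 + jap x2 ^ a2))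
        = |CW| * (2:ℝ)^a2 * jap x1 ^ a2 + |CW| * (2:ℝ)^a2 * jap x2 ^ a2 := by ring
    have e8 : |CW| * (2:ℝ)^a2 * (ε3 * jap x1 ^ (2*(M1+1)) + D3)
        = |CW| * (2:ℝ)^a2 * ε3 * jap x1 ^ (2*(M1+1)) + |CW| * (2:ℝ)^a2 * D3 := by ring
    have e9 : |CW| * (2:ℝ)^a2 * (ε4 * jap x2 ^ (2*(M2+1)) + D4)
        = |CW| * (2:ℝ)^a2 * ε4 * jap x2 ^ (2*(M2+1)) + |CW| * (2:ℝ)^a2 * D4 := by ring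
    linarith [e1, e2, e3, e4, e5, e6, e7, e8, e9, hk1, hk2, hA1m, hA2m, hAe1, hAe2, hAε1, hAε2, hV1', hV2',
      hW1, hW5, hW6, hW7, hWε1, hWε2, hWneg,
      hcu1, hcu2, hcu3, hcu4, hcP1, hcP2, hcq3, hcq4]
  have hstep1 : (1 + ‖ξ1‖^2 + ‖ξ2‖^2 + ‖ξ3‖^2 + ‖ξ4‖^2)
      + (jap x1 ^ (M1+1) + jap x2 ^ (M2+1) + jap x3 + jap x4)^2
      ≤ 1 + 4*(‖ξ1‖^2 + ‖ξ2‖^2 + ‖ξ3‖^2 + ‖ξ4‖^2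
        + jap x1 ^ (2*(M1+1)) + jap x2 ^ (2*(M2+1)) + jap x3^2 + jap x4^2) := by
    linarith [hΦ, sq_nonneg ‖ξ1‖, sq_nonneg ‖ξ2‖, sq_nonneg ‖ξ3‖, sq_nonneg ‖ξ4‖]
  have hstep2 := mul_le_mul_of_nonneg_left hstep1 (show (0:ℝ) ≤ c/4 by linarith)
  linarith [hstep2, hstep3]
end
end

section
/- Let T > 0, C ≥ 0, let g : [0,T] → [0,∞) be continuous, and let φ : [0,T] → [0,∞) be a function such that φ² is continuously differentiable on [0,T] and (φ²)'(t) ≤ 2C·(φ(t)² + g(t)·φ(t)) for all t ∈ [0,T]. Then for every t ∈ [0,T]: φ(t) ≤ e^{Ct}·φ(0) + C·∫₀ᵗ e^{C(t−θ)}·g(θ) dθ. (The regularized Gronwall argument deriving (4.11) from (4.10) in the proof of Proposition 4.3.) -/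
noncomputable section
open Real Set

private lemma le_of_forall_pos_le_add' {a b : ℝ} (h : ∀ ε : ℝ, 0 < ε → a ≤ b + ε) : a ≤ b := by
  by_contra hab
  push_neg at hab
  have := h ((a - b) / 2) (by linarith)
  linarith

/-- The regularized Gronwall argument deriving (4.11) from (4.10) in the proof of
Proposition 4.3: if `φ ≥ 0`, `φ²` is continuously differentiable on `[0,T]` (with derivative
`D` continuous on `[0,T]`) and `(φ²)'(t) ≤ 2C·(φ(t)² + g(t)·φ(t))`, then
`φ(t) ≤ e^{Ct}·φ(0) + C·∫₀ᵗ e^{C(t−θ)}·g(θ) dθ`. -/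
theorem stmt11 (T C : ℝ) (hT : 0 < T) (hC : 0 ≤ C)
    (g φ D : ℝ → ℝ)
    (hg : ContinuousOn g (Icc 0 T)) (hg0 : ∀ t ∈ Icc (0:ℝ) T, 0 ≤ g t)
    (hφ0 : ∀ t ∈ Icc (0:ℝ) T, 0 ≤ φ t)
    (hD : ContinuousOn D (Icc 0 T))
    (hderiv : ∀ t ∈ Icc (0:ℝ) T, HasDerivWithinAt (fun s => φ s ^ 2) (D t) (Icc 0 T) t)
    (hineq : ∀ t ∈ Icc (0:ℝ) T, D t ≤ 2 * C * (φ t ^ 2 + g t * φ t)) :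
    ∀ t ∈ Icc (0:ℝ) T,
      φ t ≤ Real.exp (C * t) * φ 0
        + C * ∫ θ in (0:ℝ)..t, Real.exp (C * (t - θ)) * g θ := by
  have hφ2cont : ContinuousOn (fun s => φ s ^ 2) (Icc 0 T) := fun s hs =>
    (hderiv s hs).continuousWithinAt
  -- the integrand of the auxiliary primitive
  set h : ℝ → ℝ := fun θ => Real.exp (-(C * θ)) * g θ with hh
  have hcont_h : ContinuousOn h (Icc 0 T) :=
    ((Real.continuous_exp.comp ((continuous_const.mul continuous_id).neg)).continuousOn).mul hg
  set G : ℝ → ℝ := fun u => ∫ θ in (0:ℝ)..u, h θ with hG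
  have hGcont : ContinuousOn G (Icc 0 T) := by
    have hint0 : MeasureTheory.IntegrableOn h (uIcc 0 T) := by
      rw [uIcc_of_le hT.le]
      exact hcont_h.integrableOn_Icc
    have := intervalIntegral.continuousOn_primitive_interval
      (μ := MeasureTheory.volume) hint0
    rwa [uIcc_of_le hT.le] at this
  intro t ht
  obtain ⟨ht0, htT⟩ := ht
  have hInt : ∀ u ∈ Icc (0:ℝ) T, IntervalIntegrable h MeasureTheory.volume 0 u := by
    intro u hu
    apply (hcont_h.mono _).intervalIntegrable
    rw [uIcc_of_le hu.1]
    exact Icc_subset_Icc le_rfl hu.2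
  -- rewrite the target integral
  have hint_eq : (∫ θ in (0:ℝ)..t, Real.exp (C * (t - θ)) * g θ)
      = Real.exp (C * t) * G t := by
    rw [hG, ← intervalIntegral.integral_const_mul]
    apply intervalIntegral.integral_congr
    intro θ _
    rw [hh]
    simp only [← mul_assoc, ← Real.exp_add]
    ring_nf
  apply le_of_forall_pos_le_add'
  intro δ hδ
  set ε : ℝ := δ / Real.exp (C * t) with hε
  have hεpos : 0 < ε := div_pos hδ (Real.exp_pos _)
  -- the regularized function
  set ψ : ℝ → ℝ := fun s => Real.sqrt (φ s ^ 2 + ε ^ 2) with hψ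
  have hpos : ∀ s, 0 < φ s ^ 2 + ε ^ 2 := fun s => by positivity
  have hψpos : ∀ s, 0 < ψ s := fun s => Real.sqrt_pos.mpr (hpos s)
  have hψsq : ∀ s, ψ s ^ 2 = φ s ^ 2 + ε ^ 2 := fun s =>
    Real.sq_sqrt (hpos s).le
  have hφleψ : ∀ s ∈ Icc (0:ℝ) T, φ s ≤ ψ s := by
    intro s hs
    have : φ s = Real.sqrt (φ s ^ 2) := by
      rw [Real.sqrt_sq (hφ0 s hs)]
    rw [this]
    exact Real.sqrt_le_sqrt (by nlinarith [sq_nonneg ε])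
  have hψderiv : ∀ s ∈ Icc (0:ℝ) T,
      HasDerivWithinAt ψ (D s / (2 * ψ s)) (Icc 0 T) s := by
    intro s hs
    exact ((hderiv s hs).add_const (ε ^ 2)).sqrt (ne_of_gt (hpos s))
  have hψcont : ContinuousOn ψ (Icc 0 T) := fun s hs =>
    (hψderiv s hs).continuousWithinAt
  -- the decreasing function F
  set F : ℝ → ℝ := fun s => Real.exp (-(C * s)) * ψ s - C * G s with hF
  have hFcont : ContinuousOn F (Icc 0 T) :=
    (((Real.continuous_exp.comp ((continuous_const.mul continuous_id).neg)).continuousOn).mul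
      hψcont).sub (continuousOn_const.mul hGcont)
  have hFderiv : ∀ x ∈ Ioo (0:ℝ) T, HasDerivAt F
      (Real.exp (-(C * x)) * (-C) * ψ x + Real.exp (-(C * x)) * (D x / (2 * ψ x))
        - C * h x) x := by
    intro x hx
    have hmem : Icc (0:ℝ) T ∈ nhds x := Icc_mem_nhds hx.1 hx.2
    have hψx : HasDerivAt ψ (D x / (2 * ψ x)) x :=
      (hψderiv x (Ioo_subset_Icc_self hx)).hasDerivAt hmem
    have hGx : HasDerivAt G (h x) x := by
      refine intervalIntegral.integral_hasDerivAt_right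
        (hInt x (Ioo_subset_Icc_self hx)) ?_ ?_
      · exact (hcont_h.mono Ioo_subset_Icc_self).stronglyMeasurableAtFilter isOpen_Ioo x hx
      · exact (hcont_h x (Ioo_subset_Icc_self hx)).continuousAt hmem
    have hexp : HasDerivAt (fun s => Real.exp (-(C * s))) (Real.exp (-(C * x)) * (-C)) x := by
      have h1 : HasDerivAt (fun s : ℝ => -(C * s)) (-C) x := by
        simpa [Pi.neg_def] using ((hasDerivAt_id x).const_mul C).neg
      exact h1.exp
    exact (hexp.mul hψx).sub (hGx.const_mul C)
  have hanti : AntitoneOn F (Icc 0 T) := by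
    apply antitoneOn_of_deriv_nonpos (convex_Icc 0 T) hFcont
    · intro x hx
      rw [interior_Icc] at hx
      exact (hFderiv x hx).differentiableAt.differentiableWithinAt
    · intro x hx
      rw [interior_Icc] at hx
      rw [(hFderiv x hx).deriv]
      have hxI : x ∈ Icc (0:ℝ) T := Ioo_subset_Icc_self hx
      have h1 : D x ≤ 2 * C * (ψ x ^ 2 + g x * ψ x) := by
        refine le_trans (hineq x hxI) ?_
        have h2 := hφleψ x hxI
        have h3 := hg0 x hxI
        have h4 := hψsq x
        nlinarith [mul_nonneg (mul_nonneg hC h3) (sub_nonneg.mpr h2), sq_nonneg ε,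
          mul_nonneg hC (sq_nonneg ε)]
      have h5 : D x / (2 * ψ x) ≤ C * (ψ x + g x) := by
        rw [div_le_iff₀ (by positivity)]
        nlinarith [hψpos x]
      have h6 : (0:ℝ) < Real.exp (-(C * x)) := Real.exp_pos _
      rw [hh]
      nlinarith [mul_le_mul_of_nonneg_left h5 h6.le, hψpos x]
  -- conclude
  have hFt : F t ≤ F 0 := hanti (left_mem_Icc.mpr hT.le) ⟨ht0, htT⟩ ht0
  have hF0 : F 0 = ψ 0 := by
    simp [hF, hG, intervalIntegral.integral_same]
  have hexpps : (0:ℝ) < Real.exp (C * t) := Real.exp_pos _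
  have hee : Real.exp (C * t) * Real.exp (-(C * t)) = 1 := by
    rw [← Real.exp_add]; simp
  have hψt : ψ t ≤ Real.exp (C * t) * ψ 0 + C * (Real.exp (C * t) * G t) := by
    have h0 : Real.exp (-(C * t)) * ψ t - C * G t ≤ ψ 0 := hF0 ▸ hFt
    have h1 : Real.exp (-(C * t)) * ψ t ≤ ψ 0 + C * G t := by linarith
    have h2 := mul_le_mul_of_nonneg_left h1 hexpps.le
    calc ψ t = Real.exp (C * t) * (Real.exp (-(C * t)) * ψ t) := by
          rw [← mul_assoc, hee, one_mul]
      _ ≤ Real.exp (C * t) * (ψ 0 + C * G t) := h2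
      _ = Real.exp (C * t) * ψ 0 + C * (Real.exp (C * t) * G t) := by ring
  have hφ00 : 0 ≤ φ 0 := hφ0 0 (left_mem_Icc.mpr hT.le)
  have hψ0le : ψ 0 ≤ φ 0 + ε := by
    have h8 : φ 0 ^ 2 + ε ^ 2 ≤ (φ 0 + ε) ^ 2 := by nlinarith
    calc ψ 0 ≤ Real.sqrt ((φ 0 + ε) ^ 2) := Real.sqrt_le_sqrt h8
      _ = φ 0 + ε := Real.sqrt_sq (by linarith)
  have hεexp : Real.exp (C * t) * ε = δ := by
    rw [hε, mul_div_cancel₀]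
    exact (Real.exp_pos _).ne'
  have hφt := hφleψ t ⟨ht0, htT⟩
  rw [hint_eq]
  nlinarith [hψt, hψ0le, hφt, hexpps, hεexp]
end
end
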